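/- Let φ ∈ L¹(0,1) be not almost everywhere zero and let n ∈ ℤ. Then the function φₙ : ℂ → ℂ defined by φₙ(z) = ∫₀¹ e^{(z²+n²π²)(t−1)} φ(t) dt is entire (complex differentiable on all of ℂ) and is not identically zero. -/

import Mathlib

open MeasureTheory Real Set

lemma my_entire (φ : ℝ → ℝ) (hφ : IntegrableOn φ (Ioo (0:ℝ) 1)) (c : ℂ) :
    Differentiable ℂ (fun z : ℂ =>
      ∫ t in Ioo (0:ℝ) 1, Complex.exp ((z^2 + c) * ((t:ℂ) - 1)) * (φ t : ℂ)) := by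
  intro z₀
  set μ := volume.restrict (Ioo (0:ℝ) 1)
  have hφm : AEStronglyMeasurable (fun t : ℝ => (φ t : ℂ)) μ :=
    Complex.continuous_ofReal.comp_aestronglyMeasurable hφ.aestronglyMeasurable
  set M : ℝ := Real.exp ((‖z₀‖+1)^2 + ‖c‖) with hM
  have hMpos : 0 < M := Real.exp_pos _
  have key : ∀ z : ℂ, ‖z - z₀‖ < 1 → ∀ t ∈ Ioo (0:ℝ) 1,
      ‖Complex.exp ((z^2 + c) * ((t:ℂ) - 1))‖ ≤ M := by
    intro z hz t ht
    rw [Complex.norm_exp]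
    apply Real.exp_le_exp.2
    have h1 : |(((z^2+c) * ((t:ℂ)-1)).re)| ≤ ‖(z^2+c) * ((t:ℂ)-1)‖ := Complex.abs_re_le_norm _
    refine le_trans (le_abs_self _) (h1.trans ?_)
    rw [norm_mul]
    have ht1 : ‖((t:ℂ)-1)‖ ≤ 1 := by
      rw [show ((t:ℂ)-1) = ((t - 1 : ℝ) : ℂ) by push_cast; ring, Complex.norm_real]
      rw [Real.norm_eq_abs, abs_le]
      constructor <;> nlinarith [ht.1, ht.2]
    have hz2 : ‖z^2 + c‖ ≤ (‖z₀‖+1)^2 + ‖c‖ := by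
      refine (norm_add_le _ _).trans ?_
      have : ‖z‖ ≤ ‖z₀‖ + 1 := by
        have := norm_sub_norm_le z z₀
        linarith [hz]
      gcongr
      · rw [norm_pow]
        exact pow_le_pow_left₀ (norm_nonneg _) this 2
    calc ‖z^2+c‖ * ‖((t:ℂ)-1)‖ ≤ ((‖z₀‖+1)^2 + ‖c‖) * 1 := by
          apply mul_le_mul hz2 ht1 (norm_nonneg _)
          positivity
      _ = (‖z₀‖+1)^2 + ‖c‖ := mul_one _
  have H := hasDerivAt_integral_of_dominated_loc_of_deriv_le (μ := μ)
    (F := fun z t => Complex.exp ((z^2 + c) * ((t:ℂ) - 1)) * (φ t : ℂ))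
    (F' := fun z t => Complex.exp ((z^2 + c) * ((t:ℂ) - 1)) * (2*z*((t:ℂ)-1)) * (φ t : ℂ))
    (x₀ := z₀) (s := Metric.ball z₀ 1) (bound := fun t => M * (2*(‖z₀‖+1)) * |φ t|)
    (Metric.ball_mem_nhds z₀ one_pos)
    (Filter.Eventually.of_forall fun z =>
      ((Complex.continuous_exp.comp (by continuity)).aestronglyMeasurable.mul hφm))
    ?_ ?_ ?_ ?_ ?_
  · exact H.2.differentiableAt
  · -- Integrable (F z₀)
    refine Integrable.mono' ((hφ.norm.const_mul M)) ?_ ?_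
    · exact (Complex.continuous_exp.comp (by continuity)).aestronglyMeasurable.mul hφm
    · filter_upwards [ae_restrict_mem measurableSet_Ioo] with t ht
      rw [norm_mul, Complex.norm_real, Real.norm_eq_abs]
      exact mul_le_mul_of_nonneg_right (key z₀ (by simp) t ht) (abs_nonneg _)
  · exact ((Complex.continuous_exp.comp (by continuity)).mul (by continuity)).aestronglyMeasurable.mul hφm
  · -- bound on F'
    filter_upwards [ae_restrict_mem measurableSet_Ioo] with t ht z hz
    rw [Metric.mem_ball, dist_eq_norm] at hz
    rw [norm_mul, norm_mul, Complex.norm_real, Real.norm_eq_abs]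
    have h1 : ‖Complex.exp ((z^2 + c) * ((t:ℂ) - 1))‖ ≤ M := key z hz t ht
    have ht1 : ‖((t:ℂ)-1)‖ ≤ 1 := by
      rw [show ((t:ℂ)-1) = ((t - 1 : ℝ) : ℂ) by push_cast; ring, Complex.norm_real]
      rw [Real.norm_eq_abs, abs_le]
      constructor <;> nlinarith [ht.1, ht.2]
    have h2 : ‖2*z*((t:ℂ)-1)‖ ≤ 2*(‖z₀‖+1) := by
      rw [norm_mul, norm_mul]
      have hzn : ‖z‖ ≤ ‖z₀‖ + 1 := by
        have := norm_sub_norm_le z z₀; linarith [hz]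
      calc ‖(2:ℂ)‖ * ‖z‖ * ‖((t:ℂ)-1)‖ ≤ 2 * (‖z₀‖+1) * 1 := by
            simp only [Complex.norm_ofNat]
            gcongr
        _ = 2*(‖z₀‖+1) := mul_one _
    have := mul_le_mul (mul_le_mul h1 h2 (norm_nonneg _) hMpos.le) (le_refl |φ t|) (abs_nonneg _) (by positivity)
    linarith [this]
  · simpa [Real.norm_eq_abs] using (hφ.norm.const_mul (M * (2*(‖z₀‖+1)))).restrict (s := Ioo (0:ℝ) 1)
  · -- HasDerivAt
    filter_upwards with t z _
    have h1 : HasDerivAt (fun z : ℂ => (z^2 + c) * ((t:ℂ)-1)) (2*z*((t:ℂ)-1)) z := by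
      have := ((hasDerivAt_pow 2 z).add_const c).mul_const ((t:ℂ)-1)
      simpa [mul_comm] using this
    have := h1.cexp.mul_const ((φ t : ℂ))
    convert this using 1

lemma my_exp_moment (φ : ℝ → ℝ) (hφ : IntegrableOn φ (Ioo (0:ℝ) 1)) (k : ℕ) :
    IntegrableOn (fun t => Real.exp (k * t) * φ t) (Ioo (0:ℝ) 1) := by
  refine Integrable.mono' (hφ.norm.const_mul (Real.exp k)) ?_ ?_
  · exact (Real.continuous_exp.comp (by continuity)).aestronglyMeasurable.mul hφ.aestronglyMeasurable
  · filter_upwards [ae_restrict_mem measurableSet_Ioo] with t ht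
    rw [Real.norm_eq_abs, abs_mul, abs_of_pos (Real.exp_pos _), Real.norm_eq_abs]
    have : Real.exp (k * t) ≤ Real.exp k := by
      apply Real.exp_le_exp.2
      nlinarith [ht.1, ht.2, Nat.cast_nonneg (α := ℝ) k]
    exact mul_le_mul_of_nonneg_right this (abs_nonneg _)

lemma my_ae_zero (φ : ℝ → ℝ) (hφ : IntegrableOn φ (Ioo (0:ℝ) 1))
    (h : ∀ w : ℂ, (∫ t in Ioo (0:ℝ) 1, Complex.exp (w * ((t:ℂ) - 1)) * (φ t : ℂ)) = 0) :
    ∀ᵐ t ∂(volume.restrict (Ioo (0:ℝ) 1)), φ t = 0 := by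
  -- Step A : real exponential moments vanish
  have hA : ∀ k : ℕ, (∫ t in Ioo (0:ℝ) 1, Real.exp (k * t) * φ t) = 0 := by
    intro k
    have h1 := h (k : ℂ)
    have h2 : (∫ t in Ioo (0:ℝ) 1,
        Complex.exp (k) * (Complex.exp ((k:ℂ) * ((t:ℂ) - 1)) * (φ t : ℂ))) = 0 := by
      rw [integral_const_mul, h1, mul_zero]
    have h3 : (∫ t in Ioo (0:ℝ) 1, ((Real.exp (k * t) * φ t : ℝ) : ℂ)) = 0 := by
      rw [← h2]
      refine setIntegral_congr_ae measurableSet_Ioo ?_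
      filter_upwards with t ht
      rw [← mul_assoc, ← Complex.exp_add, Complex.ofReal_mul, Complex.ofReal_exp]
      congr 2
      push_cast
      ring
    have h4 : ((∫ t in Ioo (0:ℝ) 1, Real.exp (k * t) * φ t : ℝ) : ℂ) = 0 := by
      rw [← h3]
      exact (integral_ofReal (𝕜 := ℂ)).symm
    exact_mod_cast h4
  -- Step C : polynomial-in-exp moments vanish
  have hC : ∀ p : Polynomial ℝ, (∫ t in Ioo (0:ℝ) 1, p.eval (Real.exp t) * φ t) = 0 := by
    intro p
    have key : (∫ t in Ioo (0:ℝ) 1, p.eval (Real.exp t) * φ t)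
        = ∑ k ∈ Finset.range (p.natDegree + 1),
            ∫ t in Ioo (0:ℝ) 1, p.coeff k * (Real.exp (k * t) * φ t) := by
      rw [← integral_finset_sum _ (fun k _ => (my_exp_moment φ hφ k).const_mul (p.coeff k))]
      refine setIntegral_congr_ae measurableSet_Ioo ?_
      filter_upwards with t ht
      rw [Polynomial.eval_eq_sum_range, Finset.sum_mul]
      refine Finset.sum_congr rfl fun k _ => ?_
      rw [Real.exp_nat_mul]
      ring
    rw [key]
    refine Finset.sum_eq_zero fun k _ => ?_
    rw [integral_const_mul, hA k, mul_zero]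
  -- integrability of pairing integrands
  have hint : ∀ g : C(Icc (0:ℝ) 1, ℝ),
      IntegrableOn (fun t => IccExtend zero_le_one g t * φ t) (Ioo (0:ℝ) 1) := by
    intro g
    refine Integrable.mono' (hφ.norm.const_mul ‖g‖) ?_ ?_
    · exact (g.continuous.Icc_extend').aestronglyMeasurable.mul hφ.aestronglyMeasurable
    · filter_upwards with t
      rw [Real.norm_eq_abs, abs_mul, Real.norm_eq_abs]
      gcongr
      exact g.norm_coe_le_norm _
  -- the exponential subalgebra
  set expCM : C(Icc (0:ℝ) 1, ℝ) :=
    ⟨fun x => Real.exp x, Real.continuous_exp.comp continuous_subtype_val⟩ with hexp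
  set A : Subalgebra ℝ C(Icc (0:ℝ) 1, ℝ) := Algebra.adjoin ℝ {expCM} with hA'
  have hsep : A.SeparatesPoints := by
    intro x y hxy
    refine ⟨expCM, ⟨expCM, Algebra.subset_adjoin rfl, rfl⟩, ?_⟩
    simp only [expCM, ContinuousMap.coe_mk]
    exact fun hc => hxy (Subtype.ext (Real.exp_injective hc))
  have hLA : ∀ a : C(Icc (0:ℝ) 1, ℝ), a ∈ A →
      (∫ t in Ioo (0:ℝ) 1, IccExtend zero_le_one a t * φ t) = 0 := by
    intro a ha
    rw [hA', Algebra.adjoin_singleton_eq_range_aeval] at ha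
    obtain ⟨p, rfl⟩ := ha
    refine Eq.trans ?_ (hC p)
    refine setIntegral_congr_ae measurableSet_Ioo ?_
    filter_upwards with t ht
    rw [IccExtend_of_mem _ _ (mem_Icc_of_Ioo ht)]
    have hrw : (((Polynomial.aeval expCM).toRingHom p) : C(Icc (0:ℝ) 1, ℝ))
        = ((Polynomial.aeval expCM) p) := rfl
    rw [hrw, Polynomial.aeval_continuousMap_apply]
    rfl
  -- the pairing vanishes on all continuous maps
  have hLall : ∀ g : C(Icc (0:ℝ) 1, ℝ),
      (∫ t in Ioo (0:ℝ) 1, IccExtend zero_le_one g t * φ t) = 0 := by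
    intro g
    set Lg := ∫ t in Ioo (0:ℝ) 1, IccExtend zero_le_one g t * φ t with hLg
    have key : ∀ ε : ℝ, 0 < ε → |Lg| ≤ ε * ((∫ t in Ioo (0:ℝ) 1, |φ t|)) := by
      intro ε hε
      obtain ⟨a, haA⟩ := ContinuousMap.exists_mem_subalgebra_near_continuousMap_of_separatesPoints
        A hsep g ε hε
      have h0 : (∫ t in Ioo (0:ℝ) 1, IccExtend zero_le_one (a : C(Icc (0:ℝ) 1, ℝ)) t * φ t) = 0 :=
        hLA a a.2
      have hsub : Lg = ∫ t in Ioo (0:ℝ) 1,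
            (IccExtend zero_le_one g t - IccExtend zero_le_one (a:C(Icc (0:ℝ) 1, ℝ)) t) * φ t := by
        have hs2 : (∫ t in Ioo (0:ℝ) 1,
            (IccExtend zero_le_one g t - IccExtend zero_le_one (a:C(Icc (0:ℝ) 1, ℝ)) t) * φ t)
            = (∫ t in Ioo (0:ℝ) 1, IccExtend zero_le_one g t * φ t)
              - ∫ t in Ioo (0:ℝ) 1, IccExtend zero_le_one (a:C(Icc (0:ℝ) 1, ℝ)) t * φ t := by
          rw [← integral_sub (hint g) (hint a)]
          refine integral_congr_ae ?_
          filter_upwards with t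
          ring
        rw [hs2, h0, sub_zero, hLg]
      rw [← Real.norm_eq_abs, hsub]
      refine (norm_integral_le_of_norm_le ((hφ.norm.const_mul ε)) ?_).trans ?_
      · filter_upwards with t
        rw [Real.norm_eq_abs, abs_mul, Real.norm_eq_abs]
        gcongr
        have heq : IccExtend zero_le_one g t - IccExtend zero_le_one (a:C(Icc (0:ℝ) 1, ℝ)) t
            = ((g - (a:C(Icc (0:ℝ) 1, ℝ))) (projIcc 0 1 zero_le_one t)) := by
          simp [IccExtend]
        rw [heq]
        have h1 : ‖(g - (a:C(Icc (0:ℝ) 1, ℝ))) (projIcc 0 1 zero_le_one t)‖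
            ≤ ‖g - (a:C(Icc (0:ℝ) 1, ℝ))‖ := ContinuousMap.norm_coe_le_norm _ _
        rw [Real.norm_eq_abs] at h1
        refine h1.trans ?_
        rw [← norm_neg, neg_sub]
        exact haA.le
      · rw [integral_const_mul]
        simp [Real.norm_eq_abs]
    by_contra hne
    have habs : 0 < |Lg| := abs_pos.2 hne
    have hC0 : 0 ≤ (∫ t in Ioo (0:ℝ) 1, |φ t|) := by positivity
    rcases eq_or_lt_of_le hC0 with hC1 | hC1
    · have := key 1 one_pos
      rw [← hC1, mul_zero] at this
      linarith
    · have h5 := key (|Lg| / (2 * (∫ t in Ioo (0:ℝ) 1, |φ t|))) (by positivity)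
      have h6 : |Lg| / (2 * (∫ t in Ioo (0:ℝ) 1, |φ t|)) * (∫ t in Ioo (0:ℝ) 1, |φ t|)
          = |Lg| / 2 := by field_simp
      rw [h6] at h5
      linarith
  -- conclude via test functions
  have main : ∀ᵐ x ∂(volume : Measure ℝ), x ∈ Ioo (0:ℝ) 1 → φ x = 0 := by
    refine (isOpen_Ioo).ae_eq_zero_of_integral_contDiff_smul_eq_zero ?_ ?_
    · exact hφ.locallyIntegrableOn
    · intro g hg hgsupp hgsub
      have h1 : (∫ x, g x • φ x) = ∫ x in Ioo (0:ℝ) 1, g x * φ x := by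
        rw [← setIntegral_eq_integral_of_forall_compl_eq_zero (s := Ioo (0:ℝ) 1)]
        · simp [smul_eq_mul]
        · intro x hx
          rw [image_eq_zero_of_notMem_tsupport (fun hmem => hx (hgsub hmem)), zero_smul]
      rw [h1]
      set gc : C(Icc (0:ℝ) 1, ℝ) := ⟨fun x => g x, hg.continuous.comp continuous_subtype_val⟩
      have h2 : (∫ x in Ioo (0:ℝ) 1, g x * φ x)
          = ∫ t in Ioo (0:ℝ) 1, IccExtend zero_le_one gc t * φ t := by
        refine setIntegral_congr_ae measurableSet_Ioo ?_
        filter_upwards with t ht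
        rw [IccExtend_of_mem _ _ (mem_Icc_of_Ioo ht)]
        rfl
      rw [h2, hLall gc]
  rw [ae_restrict_iff' measurableSet_Ioo]
  exact main

/-- If `φ ∈ L¹(0,1)` is not a.e. zero and `n ∈ ℤ`, then
`φₙ(z) = ∫₀¹ e^{(z²+n²π²)(t−1)} φ(t) dt` is an entire function which is not identically
zero. -/
theorem phi_n_entire_nontrivial
    (φ : ℝ → ℝ) (hφ : IntegrableOn φ (Ioo (0:ℝ) 1))
    (hφ0 : ¬ (∀ᵐ t ∂(volume.restrict (Ioo (0:ℝ) 1)), φ t = 0)) (n : ℤ) :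
    Differentiable ℂ (fun z : ℂ =>
        ∫ t in Ioo (0:ℝ) 1,
          Complex.exp ((z^2 + ((n:ℝ)^2 * Real.pi^2 : ℝ)) * ((t:ℂ) - 1)) * (φ t : ℂ))
    ∧ ¬ (∀ z : ℂ,
        (∫ t in Ioo (0:ℝ) 1,
          Complex.exp ((z^2 + ((n:ℝ)^2 * Real.pi^2 : ℝ)) * ((t:ℂ) - 1)) * (φ t : ℂ)) = 0) := by
  constructor
  · exact my_entire φ hφ (((n:ℝ)^2 * Real.pi^2 : ℝ) : ℂ)
  · intro hall
    apply hφ0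
    apply my_ae_zero φ hφ
    intro w
    set c : ℂ := (((n:ℝ)^2 * Real.pi^2 : ℝ) : ℂ) with hc
    set z : ℂ := (w - c) ^ ((2:ℂ)⁻¹) with hzdef
    have hz : z ^ 2 + c = w := by
      have h2 : ((2:ℕ):ℂ)⁻¹ = (2:ℂ)⁻¹ := by norm_num
      have := Complex.cpow_nat_inv_pow (w - c) (two_ne_zero)
      rw [h2] at this
      rw [hzdef, this]
      ring
    have := hall z
    rw [hz] at this
    exact this
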